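/- Let X be a real random variable with X ≤ 0 almost surely and E[X] finite, and let λ > 0. Then E[(1 − λX)/(1 − λE[X])] = 1; consequently, for i.i.d. nonpositive X₁,…,Xₙ and any δ ∈ (0,1], with probability at least 1 − δ, −(1/λ) log(1 − λE[X₁]) ≤ −(1/(nλ)) ∑_{i=1}^n log(1 − λXᵢ) + log(1/δ)/(λn). -/

import Mathlib

open MeasureTheory ProbabilityTheory

theorem stmt4 {Ω : Type*} [MeasurableSpace Ω] (μ : Measure Ω) [IsProbabilityMeasure μ]
    (lam : ℝ) (hlam : 0 < lam)
    (X : Ω → ℝ) (hX : Integrable X μ) (hX0 : ∀ᵐ ω ∂μ, X ω ≤ 0)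
    (n : ℕ) (hn : 0 < n) (Y : Fin n → Ω → ℝ) (Y0 : Ω → ℝ)
    (hmeas : ∀ i, Measurable (Y i))
    (hYint : Integrable Y0 μ)
    (hY0 : ∀ᵐ ω ∂μ, Y0 ω ≤ 0)
    (hindep : iIndepFun Y μ)
    (hident : ∀ i, IdentDistrib (Y i) Y0 μ μ)
    (δ : ℝ) (hδ : δ ∈ Set.Ioc (0:ℝ) 1) :
    (∫ ω, (1 - lam * X ω) / (1 - lam * ∫ x, X x ∂μ) ∂μ = 1) ∧
    ENNReal.ofReal (1 - δ) ≤
      μ {ω | -(1 / lam) * Real.log (1 - lam * ∫ x, Y0 x ∂μ) ≤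
        -(1 / (n * lam)) * ∑ i, Real.log (1 - lam * Y i ω) +
          Real.log (1 / δ) / (lam * n)} := by
  obtain ⟨hδ0, hδ1⟩ := hδ
  have hnR : (0:ℝ) < n := Nat.cast_pos.mpr hn
  constructor
  · -- part 1
    have hEX : ∫ x, X x ∂μ ≤ 0 := integral_nonpos_of_ae hX0
    have hd : (0:ℝ) < 1 - lam * ∫ x, X x ∂μ := by nlinarith
    rw [integral_div, integral_sub (integrable_const _) (hX.const_mul lam),
      integral_const, integral_const_mul]
    simp [div_self hd.ne']
  · -- part 2
    set c : ℝ := 1 - lam * ∫ x, Y0 x ∂μ with hc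
    have hEY : ∫ x, Y0 x ∂μ ≤ 0 := integral_nonpos_of_ae hY0
    have hc1 : (1:ℝ) ≤ c := by simp only [hc]; nlinarith
    have hc0 : (0:ℝ) < c := lt_of_lt_of_le one_pos hc1
    set g : ℝ → ℝ := fun a => Real.log (1 - lam * a) - Real.log c with hg
    have hgm : Measurable g :=
      (Real.measurable_log.comp (measurable_const.sub (measurable_id.const_mul lam))).sub
        measurable_const
    set W : Fin n → Ω → ℝ := fun i => g ∘ Y i with hW
    have hWm : ∀ i, Measurable (W i) := fun i => hgm.comp (hmeas i)
    have hWindep : iIndepFun W μ :=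
      hindep.comp (fun _ => g) (fun _ => hgm)
    -- exp of W on Y0
    have hexpY0 : (fun ω => Real.exp (1 * (g ∘ Y0) ω)) =ᵐ[μ]
        fun ω => (1 - lam * Y0 ω) / c := by
      filter_upwards [hY0] with ω hω
      have h1 : (0:ℝ) < 1 - lam * Y0 ω := by nlinarith
      simp [hg, Real.exp_sub, Real.exp_log h1, Real.exp_log hc0]
    have hintY0 : Integrable (fun ω => Real.exp (1 * (g ∘ Y0) ω)) μ := by
      refine (integrable_congr hexpY0.symm).mp ?_
      exact ((integrable_const (1:ℝ)).sub (hYint.const_mul lam)).div_const c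
    have hEexpY0 : ∫ ω, Real.exp (1 * (g ∘ Y0) ω) ∂μ = 1 := by
      rw [integral_congr_ae hexpY0, integral_div,
        integral_sub (integrable_const _) (hYint.const_mul lam),
        integral_const, integral_const_mul]
      simp [div_self hc0.ne']
      exact div_self hc0.ne'
    -- transfer to each W i
    have hidW : ∀ i, IdentDistrib (fun ω => Real.exp (1 * W i ω))
        (fun ω => Real.exp (1 * (g ∘ Y0) ω)) μ μ := by
      intro i
      exact ((hident i).comp hgm).comp (measurable_const_mul 1).exp
    have hWint : ∀ i, Integrable (fun ω => Real.exp (1 * W i ω)) μ := fun i =>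
      (hidW i).integrable_iff.mpr hintY0
    have hWmgf : ∀ i, mgf (W i) μ 1 = 1 := by
      intro i
      rw [mgf]
      rw [(hidW i).integral_eq]
      exact hEexpY0
    -- sum
    set S : Ω → ℝ := ∑ i, W i with hS
    have hSmgf : mgf S μ 1 = 1 := by
      rw [hS, hWindep.mgf_sum hWm]
      simp [hWmgf]
    have hSint : Integrable (fun ω => Real.exp (1 * S ω)) μ :=
      hWindep.integrable_exp_mul_sum hWm (fun i _ => hWint i)
    set L : ℝ := Real.log (1 / δ) with hL
    have markov : (μ {ω | L ≤ S ω}).toReal ≤ δ := by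
      have := measure_ge_le_exp_mul_mgf (X := S) (μ := μ) (t := 1) L zero_le_one hSint
      rw [hSmgf] at this
      calc (μ {ω | L ≤ S ω}).toReal ≤ Real.exp (-1 * L) * 1 := this
        _ = δ := by
          rw [mul_one, hL, neg_one_mul, one_div, Real.log_inv, neg_neg,
            Real.exp_log hδ0]
    -- rewrite target set
    have hSval : ∀ ω, S ω = (∑ i, Real.log (1 - lam * Y i ω)) - n * Real.log c := by
      intro ω
      simp only [hS, Finset.sum_apply, hW, Function.comp_apply, hg, Finset.sum_sub_distrib,
        Finset.sum_const, Finset.card_univ, Fintype.card_fin, nsmul_eq_mul]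
    have hset : {ω | -(1 / lam) * Real.log c ≤
        -(1 / (n * lam)) * ∑ i, Real.log (1 - lam * Y i ω) + L / (lam * n)}
        = {ω | S ω ≤ L} := by
      ext ω
      set A : ℝ := ∑ i, Real.log (1 - lam * Y i ω) with hA
      simp only [Set.mem_setOf_eq, hSval ω, ← hA]
      have hpos : (0:ℝ) < n * lam := mul_pos hnR hlam
      rw [← sub_nonneg, ← sub_nonneg (a := L)]
      have e : -(1/(n*lam))*A + L/(lam*n) - (-(1/lam)*Real.log c)
          = (L - (A - n*Real.log c))/(n*lam) := by field_simp; ring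
      rw [e, le_div_iff₀ hpos, zero_mul]
    have hSmeas : Measurable S := by
      have h1 : Measurable fun ω => ∑ i, W i ω := Finset.measurable_sum _ fun i _ => hWm i
      have h2 : S = fun ω => ∑ i, W i ω := by ext ω; simp [hS]
      rw [h2]; exact h1
    have hTmeas : MeasurableSet {ω | S ω ≤ L} := measurableSet_le hSmeas measurable_const
    have hcompl : μ {ω | S ω ≤ L}ᶜ ≤ ENNReal.ofReal δ := by
      have hsub : {ω | S ω ≤ L}ᶜ ⊆ {ω | L ≤ S ω} := by
        intro ω hω
        simp only [Set.mem_compl_iff, Set.mem_setOf_eq, not_le] at hω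
        exact hω.le
      refine le_trans (measure_mono hsub) ?_
      rw [ENNReal.le_ofReal_iff_toReal_le (measure_ne_top _ _) hδ0.le]
      exact markov
    rw [hset]
    have hμT : μ {ω | S ω ≤ L} = 1 - μ {ω | S ω ≤ L}ᶜ := by
      rw [measure_compl hTmeas (measure_ne_top _ _), measure_univ,
        ENNReal.sub_sub_cancel ENNReal.one_ne_top (prob_le_one)]
    rw [hμT]
    calc ENNReal.ofReal (1 - δ) = 1 - ENNReal.ofReal δ := by
          rw [ENNReal.ofReal_sub _ hδ0.le, ENNReal.ofReal_one]
      _ ≤ 1 - μ {ω | S ω ≤ L}ᶜ := tsub_le_tsub_left hcompl 1
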